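/- The function h : ℝ → ℝ given by h(x) = x² + 2sin²(x) is strongly quasiconvex on ℝ with modulus γ = 1/2, but h is not convex. -/

import Mathlib

open Real

set_option maxHeartbeats 1000000

lemma keyK (a M : ℝ) (ha : 0 ≤ a) (haM : a ≤ M) :
    Real.cos (2*M) - Real.cos (2*a) ≤ (M - a) * (M/2 + a) := by
  have hid : Real.cos (2*M) - Real.cos (2*a)
      = -2 * Real.sin (M + a) * Real.sin (M - a) := by
    rw [Real.cos_sub_cos]; ring_nf
  rcases le_or_gt 2 (M/2 + a) with hbig | hsmall
  · have h1 : |Real.sin (M + a)| ≤ 1 := Real.abs_sin_le_one _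
    have h2 : |Real.sin (M - a)| ≤ 1 := Real.abs_sin_le_one _
    have h3 : |Real.sin (M - a)| ≤ |M - a| := Real.abs_sin_le_abs
    have h4 : |M - a| = M - a := abs_of_nonneg (by linarith)
    rw [hid]
    rcases le_or_gt (M - a) 1 with hc | hc
    · nlinarith [abs_nonneg (Real.sin (M+a)), abs_nonneg (Real.sin (M-a)),
        neg_abs_le (Real.sin (M+a)), le_abs_self (Real.sin (M+a)),
        neg_abs_le (Real.sin (M-a)), le_abs_self (Real.sin (M-a)),
        mul_le_mul_of_nonneg_right h1 (abs_nonneg (Real.sin (M-a)))]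
    · nlinarith [abs_nonneg (Real.sin (M+a)), abs_nonneg (Real.sin (M-a)),
        neg_abs_le (Real.sin (M+a)), le_abs_self (Real.sin (M+a)),
        neg_abs_le (Real.sin (M-a)), le_abs_self (Real.sin (M-a)),
        mul_le_mul_of_nonneg_right h1 (abs_nonneg (Real.sin (M-a)))]
  · rcases le_or_gt (M + a) π with hpi | hpi
    · have s1 : 0 ≤ Real.sin (M + a) :=
        Real.sin_nonneg_of_nonneg_of_le_pi (by linarith) hpi
      have s2 : 0 ≤ Real.sin (M - a) :=
        Real.sin_nonneg_of_nonneg_of_le_pi (by linarith) (by linarith)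
      rw [hid]; nlinarith
    · have hsub : Real.sin (M + a) = -Real.sin (M + a - π) := by
        rw [Real.sin_sub_pi]; ring
      have h1 : |Real.sin (M + a - π)| ≤ |M + a - π| := Real.abs_sin_le_abs
      have h2 : |Real.sin (M - a)| ≤ |M - a| := Real.abs_sin_le_abs
      have e1 : |M + a - π| = M + a - π := abs_of_nonneg (by linarith)
      have e2 : |M - a| = M - a := abs_of_nonneg (by linarith)
      rw [e1] at h1; rw [e2] at h2
      have hπ : (3:ℝ) < π := Real.pi_gt_three
      have hM4 : M < 4 := by linarith
      rw [hid, hsub]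
      nlinarith [neg_abs_le (Real.sin (M+a-π)), le_abs_self (Real.sin (M+a-π)),
        neg_abs_le (Real.sin (M-a)), le_abs_self (Real.sin (M-a)),
        abs_nonneg (Real.sin (M+a-π)), abs_nonneg (Real.sin (M-a)),
        mul_le_mul h1 h2 (abs_nonneg _) (by linarith : (0:ℝ) ≤ M + a - π)]

lemma evenH (z : ℝ) : z^2 + 2*Real.sin z^2 = |z|^2 + 2*Real.sin |z| ^2 := by
  rcases abs_choice z with h | h
  · rw [h]
  · rw [h, Real.sin_neg]; ring

theorem example_strongly_quasiconvex_not_convex :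
    (∀ x y : ℝ, ∀ lam : ℝ, lam ∈ Set.Icc (0:ℝ) 1 →
      (fun z => z ^ 2 + 2 * Real.sin z ^ 2) (lam * y + (1 - lam) * x) ≤
        max ((fun z => z ^ 2 + 2 * Real.sin z ^ 2) y)
            ((fun z => z ^ 2 + 2 * Real.sin z ^ 2) x)
          - lam * (1 - lam) * ((1 / 2 : ℝ) / 2) * |x - y| ^ 2) ∧
    ¬ ConvexOn ℝ Set.univ (fun z : ℝ => z ^ 2 + 2 * Real.sin z ^ 2) := by
  constructor
  · intro x y lam hlam
    obtain ⟨h0, h1⟩ := hlam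
    simp only
    set m : ℝ := lam * y + (1 - lam) * x with hm_def
    set M : ℝ := max |x| |y| with hM_def
    set a : ℝ := |m| with ha_def
    have hMx : |x| ≤ M := le_max_left _ _
    have hMy : |y| ≤ M := le_max_right _ _
    have hx1 : x ≤ M := le_trans (le_abs_self x) hMx
    have hx2 : -M ≤ x := by have := neg_abs_le x; linarith
    have hy1 : y ≤ M := le_trans (le_abs_self y) hMy
    have hy2 : -M ≤ y := by have := neg_abs_le y; linarith
    have hd1 : |x - y| ≤ 2*M - x - y := by
      rcases abs_cases (x - y) with ⟨h, _⟩ | ⟨h, _⟩ <;> rw [h] <;> linarith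
    have hd2 : |x - y| ≤ 2*M + x + y := by
      rcases abs_cases (x - y) with ⟨h, _⟩ | ⟨h, _⟩ <;> rw [h] <;> linarith
    have hdM : |x - y| ≤ 2*M := by
      rcases abs_cases (x - y) with ⟨h, _⟩ | ⟨h, _⟩ <;> rw [h] <;> linarith
    have hlam' : 0 ≤ lam * (1 - lam) := mul_nonneg h0 (by linarith)
    -- M - |m| ≥ lam (1-lam) |x - y|
    have hA : lam * (1 - lam) * |x - y| ≤ M - m := by
      have := mul_le_mul_of_nonneg_left hd1 hlam'
      nlinarith [mul_nonneg (mul_nonneg h0 h0) (by linarith : (0:ℝ) ≤ M - y),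
        mul_nonneg (mul_nonneg (by linarith : (0:ℝ) ≤ 1 - lam) (by linarith : (0:ℝ) ≤ 1 - lam))
          (by linarith : (0:ℝ) ≤ M - x)]
    have hB : lam * (1 - lam) * |x - y| ≤ M + m := by
      have := mul_le_mul_of_nonneg_left hd2 hlam'
      nlinarith [mul_nonneg (mul_nonneg h0 h0) (by linarith : (0:ℝ) ≤ M + y),
        mul_nonneg (mul_nonneg (by linarith : (0:ℝ) ≤ 1 - lam) (by linarith : (0:ℝ) ≤ 1 - lam))
          (by linarith : (0:ℝ) ≤ M + x)]
    have hAm : lam * (1 - lam) * |x - y| ≤ M - a := by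
      rcases abs_cases m with ⟨h, _⟩ | ⟨h, _⟩ <;> rw [ha_def, h] <;> linarith
    have haM : a ≤ M := by
      have h' := mul_nonneg hlam' (abs_nonneg (x - y)); linarith
    have ha0 : 0 ≤ a := abs_nonneg m
    -- max(h y, h x) ≥ H(M)
    have hmax : M^2 + 2*Real.sin M^2 ≤ max (y ^ 2 + 2 * Real.sin y ^ 2) (x ^ 2 + 2 * Real.sin x ^ 2) := by
      rcases max_choice |x| |y| with h | h
    -- M = |x| or M = |y|
      · calc M^2 + 2*Real.sin M^2 = x^2 + 2*Real.sin x^2 := by rw [hM_def, h, ← evenH]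
          _ ≤ _ := le_max_right _ _
      · calc M^2 + 2*Real.sin M^2 = y^2 + 2*Real.sin y^2 := by rw [hM_def, h, ← evenH]
          _ ≤ _ := le_max_left _ _
    have hhm : m^2 + 2*Real.sin m^2 = a^2 + 2*Real.sin a^2 := evenH m
    -- key lemma
    have key := keyK a M ha0 haM
    have cM := Real.cos_two_mul M
    have ca := Real.cos_two_mul a
    have pM := Real.sin_sq_add_cos_sq M
    have pa := Real.sin_sq_add_cos_sq a
    have step1 : a^2 + 2*Real.sin a^2 + (M - a)*M/2 ≤ M^2 + 2*Real.sin M^2 := by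
      nlinarith [key]
    have step2 : lam * (1 - lam) * ((1/2 : ℝ)/2) * |x - y| ^ 2 ≤ (M - a)*M/2 := by
      have hprod := mul_le_mul hAm hdM (abs_nonneg (x - y)) (by linarith : (0:ℝ) ≤ M - a)
      nlinarith
    calc m ^ 2 + 2 * Real.sin m ^ 2 = a^2 + 2*Real.sin a^2 := hhm
      _ ≤ M^2 + 2*Real.sin M^2 - (M - a)*M/2 := by linarith
      _ ≤ _ := by linarith
  · intro hconv
    have h2 := hconv.2 (Set.mem_univ (π/2 - 1)) (Set.mem_univ (π/2 + 1))
      (by norm_num : (0:ℝ) ≤ 1/2) (by norm_num : (0:ℝ) ≤ 1/2) (by norm_num)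
    simp only [smul_eq_mul] at h2
    have e0 : (1/2 : ℝ) * (π/2 - 1) + (1/2 : ℝ) * (π/2 + 1) = π/2 := by ring
    rw [e0] at h2
    have e1 : Real.sin (π/2) = 1 := Real.sin_pi_div_two
    have e2 : Real.sin (π/2 - 1) = Real.cos 1 := Real.sin_pi_div_two_sub 1
    have e3 : Real.sin (π/2 + 1) = Real.cos 1 := by
      rw [show π/2 + 1 = π - (π/2 - 1) by ring, Real.sin_pi_sub, Real.sin_pi_div_two_sub]
    rw [e1, e2, e3] at h2
    have hs : (3/4 : ℝ) < Real.sin 1 := by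
      have := Real.sin_gt_sub_cube (by norm_num : (0:ℝ) < 1)
      norm_num at this; linarith
    have hp := Real.sin_sq_add_cos_sq 1
    nlinarith [h2]
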